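/- Let f : ℂ → ℂ, let x_0, x_1, … be pairwise distinct complex numbers, and define the inverse differences by φ_0[x_k] = f(x_k) for all k ≥ 0, and φ_{i+1}[x_0,…,x_i,x_k] = (x_k − x_i)/(φ_i[x_0,…,x_{i-1},x_k] − φ_i[x_0,…,x_i]) for k > i. Fix n ≥ 0 and assume that all inverse differences φ_j[x_0,…,x_{j-1},x_k] for 0 ≤ j ≤ k ≤ n are well defined (every denominator in the recursion is nonzero). Set d_m = φ_m[x_0,…,x_m] and define A_m, B_m by the Wallis recurrence A_{-2} = 0, B_{-2} = 1, A_{-1} = 1, B_{-1} = 0, A_m = d_m·A_{m-1} + (X − x_{m-1})·A_{m-2}, B_m = d_m·B_{m-1} + (X − x_{m-1})·B_{m-2}. Then for every 0 ≤ i ≤ n, f(x_i)·B_n(x_i) = A_n(x_i), i.e. the linearized residual R_n(x) = f(x)B_n(x) − A_n(x) vanishes at every interpolation point x_0, …, x_n. -/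
import Mathlib


open Polynomial

/-- Wallis numerator polynomials of the Thiele-type continued fraction
`d₀ + (x − x₀)/(d₁ + (x − x₁)/(d₂ + …))`, with index shifted by 2:
`wA d xs 0 = A₋₂ = 0`, `wA d xs 1 = A₋₁ = 1`, `wA d xs (m+2) = A_m`. -/
noncomputable def wA (d xs : ℕ → ℂ) : ℕ → ℂ[X]
  | 0 => 0
  | 1 => 1
  | 2 => C (d 0)
  | (m + 3) => C (d (m + 1)) * wA d xs (m + 2) + (X - C (xs m)) * wA d xs (m + 1)

/-- Wallis denominator polynomials, with index shifted by 2: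
`wB d xs 0 = B₋₂ = 1`, `wB d xs 1 = B₋₁ = 0`, `wB d xs (m+2) = B_m`. -/
noncomputable def wB (d xs : ℕ → ℂ) : ℕ → ℂ[X]
  | 0 => 1
  | 1 => 0
  | 2 => 1
  | (m + 3) => C (d (m + 1)) * wB d xs (m + 2) + (X - C (xs m)) * wB d xs (m + 1)

/-- Inverse differences of `f` at the points `xs`: `phi f xs i k` denotes
`φ_i[x_0, …, x_{i-1}, x_k]`, defined by `φ_0[x_k] = f(x_k)` and
`φ_{i+1}[x_0,…,x_i,x_k] = (x_k − x_i)/(φ_i[x_0,…,x_{i-1},x_k] − φ_i[x_0,…,x_i])`. -/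
noncomputable def phi (f : ℂ → ℂ) (xs : ℕ → ℂ) : ℕ → ℕ → ℂ
  | 0, k => f (xs k)
  | (i + 1), k => (xs k - xs i) / (phi f xs i k - phi f xs i i)

/-- Linearized interpolation property of the Thiele interpolating continued fraction:
with `d_m = φ_m[x_0,…,x_m]` the inverse differences of `f`, all of which are assumed to be
well defined up to index `n` (no denominator in the recursion vanishes), the linearized
residual `R_n(x) = f(x)B_n(x) − A_n(x)` vanishes at every interpolation point `x_0, …, x_n`. -/
theorem thiele_linearized_interpolation (f : ℂ → ℂ) (xs : ℕ → ℂ)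
    (hdist : Function.Injective xs) (n : ℕ)
    (hwd : ∀ i k, i < k → k ≤ n → phi f xs i k ≠ phi f xs i i) :
    ∀ i ≤ n,
      f (xs i) * (wB (fun m => phi f xs m m) xs (n + 2)).eval (xs i) =
        (wA (fun m => phi f xs m m) xs (n + 2)).eval (xs i) := by
  intro i hi
  set d : ℕ → ℂ := fun m => phi f xs m m with hdfn
  set y := xs i with hy
  set eA : ℕ → ℂ := fun m => (wA d xs m).eval y with heA
  set eB : ℕ → ℂ := fun m => (wB d xs m).eval y with heB
  set t : ℕ → ℂ := fun j => phi f xs j i with ht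
  set c : ℕ → ℂ := fun j => if j = 0 then 1 else y - xs (j - 1) with hc
  have hrecA : ∀ j, eA (j + 2) = d j * eA (j + 1) + c j * eA j := by
    intro j
    cases j with
    | zero => simp [heA, hc, wA]
    | succ j => simp [heA, hc, wA]; try ring
  have hrecB : ∀ j, eB (j + 2) = d j * eB (j + 1) + c j * eB j := by
    intro j
    cases j with
    | zero => simp [heB, hc, wB]
    | succ j => simp [heB, hc, wB]; try ring
  have hP : ∀ j ≤ i, f y * (t j * eB (j + 1) + c j * eB j) =
      t j * eA (j + 1) + c j * eA j := by
    intro j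
    induction j with
    | zero =>
      intro _
      simp [ht, hc, heA, heB, phi, wA, wB, hy]
    | succ j ih =>
      intro hji
      have hji' : j ≤ i := Nat.le_of_succ_le hji
      have hlt : j < i := hji
      have hne : t j - d j ≠ 0 := by
        have := hwd j i hlt hi
        simpa [ht, hdfn, sub_eq_zero] using this
      have key : t j * t (j + 1) = d j * t (j + 1) + (y - xs j) := by
        have h1 : t (j + 1) = (y - xs j) / (t j - d j) := by
          simp [ht, hdfn, phi, hy]
        rw [h1]
        field_simp
        ring
      have ih' := ih hji'
      have hc1 : c (j + 1) = y - xs j := by simp [hc]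
      rw [hc1, hrecA j, hrecB j]
      linear_combination t (j + 1) * ih' + (eA (j + 1) - f y * eB (j + 1)) * key
  have hRi : f y * eB (i + 2) = eA (i + 2) := by
    have hPi := hP i le_rfl
    have hti : t i = d i := by simp [ht, hdfn]
    rw [hti] at hPi
    rw [hrecA i, hrecB i]
    linear_combination hPi
  have hQ : ∀ m, f y * eB (i + m + 2) = eA (i + m + 2) ∧
      f y * eB (i + m + 3) = eA (i + m + 3) := by
    intro m
    induction m with
    | zero =>
      refine ⟨by simpa using hRi, ?_⟩
      have hA : eA (i + 0 + 3) = d (i + 1) * eA (i + 2) + (y - xs i) * eA (i + 1) := by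
        simp [heA, wA]; try ring
      have hB : eB (i + 0 + 3) = d (i + 1) * eB (i + 2) + (y - xs i) * eB (i + 1) := by
        simp [heB, wB]; try ring
      have hyy : y - xs i = 0 := by simp [hy]
      rw [hA, hB, hyy]
      linear_combination d (i + 1) * hRi
    | succ m ih =>
      obtain ⟨h1, h2⟩ := ih
      refine ⟨by have e : i + (m + 1) + 2 = i + m + 3 := by ring
                 rw [e]; exact h2, ?_⟩
      have hA : eA (i + (m + 1) + 3) =
          d (i + m + 2) * eA (i + m + 3) + (y - xs (i + m + 1)) * eA (i + m + 2) := by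
        have : i + (m + 1) + 3 = (i + m + 1) + 3 := by ring
        rw [this]
        simp [heA, wA]
        try ring
      have hB : eB (i + (m + 1) + 3) =
          d (i + m + 2) * eB (i + m + 3) + (y - xs (i + m + 1)) * eB (i + m + 2) := by
        have : i + (m + 1) + 3 = (i + m + 1) + 3 := by ring
        rw [this]
        simp [heB, wB]
        try ring
      rw [hA, hB]
      linear_combination d (i + m + 2) * h2 + (y - xs (i + m + 1)) * h1
  have hn : i + (n - i) + 2 = n + 2 := by omega
  have := (hQ (n - i)).1
  rw [hn] at this
  simpa [heA, heB, hy, hdfn] using this
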